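/- Let k ≥ 2 and m ≥ 1, and let n = k^{m−1}, so that kn = k^m. Then the shuffle group G_{k,k^m} is isomorphic as an abstract group to the wreath product S_k ≀ C_m, i.e., to the semidirect product (∏_{i ∈ Z/mZ} Sym({0,...,k−1})) ⋊ C_m in which a generator of the cyclic group C_m of order m acts by cyclically shifting the m coordinates of the direct product. -/

import Mathlib

/-- The standard shuffle `σ` on a deck of `k * n` cards whose positions are labelled by
`Fin (k * n)`: it sends position `i + j * n` (for `i ∈ {0,…,n-1}`, `j ∈ {0,…,k-1}`)
to position `i * k + j`. -/
def stdShuffle (k n : ℕ) : Equiv.Perm (Fin (k * n)) :=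
  finProdFinEquiv.symm.trans ((Equiv.prodComm (Fin k) (Fin n)).trans
    (finProdFinEquiv.trans (finCongr (Nat.mul_comm n k))))

/-- The permutation `ρ_τ` of the `k * n` cards induced by a permutation `τ` of the `k`
piles: it sends position `i + j * n` (for `i ∈ {0,…,n-1}`, `j ∈ {0,…,k-1}`) to
position `i + τ(j) * n`. -/
def pilePerm (k n : ℕ) (τ : Equiv.Perm (Fin k)) : Equiv.Perm (Fin (k * n)) :=
  finProdFinEquiv.symm.trans ((Equiv.prodCongr τ (Equiv.refl (Fin n))).trans finProdFinEquiv)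

/-- The shuffle group `G_{k,kn}`, the subgroup of `Sym({0,…,kn-1})` generated by `σ`
together with all `ρ_τ` (equivalently, by all products `ρ_τ · σ`). -/
def shuffleGroup (k n : ℕ) : Subgroup (Equiv.Perm (Fin (k * n))) :=
  Subgroup.closure ({stdShuffle k n} ∪ Set.range (pilePerm k n))

/-- The action of a permutation of `α` on tuples `α → G` by permuting coordinates. -/
def coordAct (α : Type*) (G : Type*) [Group G] : Equiv.Perm α →* MulAut (α → G) where
  toFun g := MulEquiv.arrowCongr g (MulEquiv.refl G)
  map_one' := by ext f i; rfl
  map_mul' g h := by ext f i; rfl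

/-- The translation homomorphism from the cyclic group `C_m` of order `m` (realised as
`Multiplicative (ZMod m)`) into the permutations of `ZMod m`. -/
def translationPerm (m : ℕ) : Multiplicative (ZMod m) →* Equiv.Perm (ZMod m) where
  toFun z := Equiv.addLeft z.toAdd
  map_one' := by ext x; simp
  map_mul' z w := by ext x; simp [add_assoc]

/-- The action of the cyclic group `C_m` on `m`-tuples of elements of `G` by cyclically
shifting the `m` coordinates. -/
def cyclicShiftAct (m : ℕ) (G : Type*) [Group G] :
    Multiplicative (ZMod m) →* MulAut (ZMod m → G) :=
  (coordAct (ZMod m) G).comp (translationPerm m)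

/-! ### Auxiliary material -/

namespace ShuffleWreathAux

open Equiv SemidirectProduct

/-- `ZMod m ≃ Fin m` for `m ≠ 0`. -/
def zEquiv (m : ℕ) [NeZero m] : ZMod m ≃ Fin m where
  toFun z := ⟨z.val, ZMod.val_lt z⟩
  invFun a := ((a : ℕ) : ZMod m)
  left_inv z := ZMod.natCast_rightInverse z
  right_inv a := Fin.ext (ZMod.val_cast_of_lt a.isLt)

/-- base-`k` digits of a number below `k ^ m`, indexed by `ZMod m`. -/
def digitEquiv (k m : ℕ) [NeZero m] : Fin (k ^ m) ≃ (ZMod m → Fin k) :=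
  finFunctionFinEquiv.symm.trans (Equiv.arrowCongr (zEquiv m).symm (Equiv.refl (Fin k)))

/-- composite equivalence `Fin (k * n) ≃ (ZMod m → Fin k)` when `k * n = k ^ m`. -/
def cardEquiv (k n m : ℕ) [NeZero m] (h1 : k * n = k ^ m) : Fin (k * n) ≃ (ZMod m → Fin k) :=
  (finCongr h1).trans (digitEquiv k m)

lemma cardEquiv_apply_val (k n m : ℕ) [NeZero m] (h1 : k * n = k ^ m) (p : Fin (k * n))
    (z : ZMod m) : ((cardEquiv k n m h1 p z : Fin k) : ℕ) = (p : ℕ) / k ^ z.val % k := by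
  simp [cardEquiv, digitEquiv, Equiv.arrowCongr, zEquiv]

/-- A `MulEquiv` version of `Equiv.permCongr`. -/
def permCongrMulEquiv {α β : Type*} (e : α ≃ β) : Equiv.Perm α ≃* Equiv.Perm β where
  toEquiv := e.permCongr
  map_mul' p q := by
    ext x
    simp [Equiv.permCongr_apply, Equiv.Perm.mul_apply]

lemma permCongrMulEquiv_apply {α β : Type*} (e : α ≃ β) (p : Equiv.Perm α) (x : β) :
    permCongrMulEquiv e p x = e (p (e.symm x)) := rfl

/-- Permutations of each coordinate value give a permutation of the function space. -/
def piPermHom (α β : Type*) : (α → Equiv.Perm β) →* Equiv.Perm (α → β) where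
  toFun τs := Equiv.piCongrRight τs
  map_one' := by ext f a; rfl
  map_mul' τs σs := by ext f a; rfl

/-- A permutation of the index set gives a permutation of the function space. -/
def arrowPermHom (α β : Type*) : Equiv.Perm α →* Equiv.Perm (α → β) where
  toFun g := Equiv.arrowCongr g (Equiv.refl β)
  map_one' := by ext f a; rfl
  map_mul' g h := by ext f a; rfl

variable (k m : ℕ)

/-- The imprimitive action of the wreath product on `ZMod m → Fin k`. -/
noncomputable def Phi :
    SemidirectProduct (ZMod m → Equiv.Perm (Fin k)) (Multiplicative (ZMod m))
      (cyclicShiftAct m (Equiv.Perm (Fin k))) →* Equiv.Perm (ZMod m → Fin k) :=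
  SemidirectProduct.lift (piPermHom (ZMod m) (Fin k))
    ((arrowPermHom (ZMod m) (Fin k)).comp (translationPerm m))
    (by
      intro g
      ext τs : 1
      simp only [MonoidHom.comp_apply, MulEquiv.coe_toMonoidHom, MulAut.conj_apply]
      rw [eq_mul_inv_iff_mul_eq]
      ext f i
      rfl)

lemma Phi_apply (x) (f : ZMod m → Fin k) (i : ZMod m) :
    Phi k m x f i = x.left i (f (-x.right.toAdd + i)) := by
  rfl

lemma Phi_injective (hk : 2 ≤ k) [NeZero m] : Function.Injective (Phi k m) := by
  rw [injective_iff_map_eq_one]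
  intro x hx
  have key : ∀ (f : ZMod m → Fin k) (i : ZMod m), x.left i (f (-x.right.toAdd + i)) = f i := by
    intro f i
    have h := congrFun (congrArg (fun g : Equiv.Perm (ZMod m → Fin k) => g f) hx) i
    rw [← Phi_apply]
    simpa using h
  have hz : x.right.toAdd = 0 := by
    by_contra hzne
    have hne : -x.right.toAdd + (0 : ZMod m) ≠ 0 := by
      simpa using hzne
    have h1 := key (fun t => if t = 0 then (⟨0, by omega⟩ : Fin k) else ⟨1, by omega⟩) 0
    have h2 := key (fun _ => (⟨1, by omega⟩ : Fin k)) 0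
    simp only [if_neg hne, if_pos rfl] at h1
    rw [h1] at h2
    exact absurd (congrArg Fin.val h2) (by simp)
  have hleft : x.left = 1 := by
    funext i
    refine Equiv.ext fun v => ?_
    have := key (fun _ => v) i
    simpa using this
  have hright : x.right = 1 := by
    have : x.right.toAdd = (1 : Multiplicative (ZMod m)).toAdd := hz
    exact Multiplicative.toAdd.injective this
  exact SemidirectProduct.ext hleft hright

/-! ### digit computations -/

lemma digit_lower {k m' A B l : ℕ} (hk : 0 < k) (hl : l < m') :
    (A + k ^ m' * B) / k ^ l % k = A / k ^ l % k := by
  have hpow : k ^ l * (k * k ^ (m' - l - 1)) = k ^ m' := by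
    rw [← pow_succ', ← pow_add]
    congr 1
    omega
  have h2 : A + k ^ m' * B = A + k ^ l * (k * (k ^ (m' - l - 1) * B)) := by
    rw [← hpow]; ring
  rw [h2, Nat.add_mul_div_left _ _ (pow_pos hk l), Nat.add_mul_mod_self_left]

lemma digit_lower' {k m' n A B l : ℕ} (hk : 0 < k) (hl : l < m') (hn : n = k ^ m') :
    (A + n * B) / k ^ l % k = A / k ^ l % k := by
  subst hn; exact digit_lower hk hl

lemma stdShuffle_val (k n : ℕ) (a : Fin k) (b : Fin n) :
    ((stdShuffle k n (finProdFinEquiv (a, b)) : Fin (k * n)) : ℕ) = (a : ℕ) + k * (b : ℕ) := by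
  simp [stdShuffle]

lemma pilePerm_val (k n : ℕ) (τ : Equiv.Perm (Fin k)) (a : Fin k) (b : Fin n) :
    ((pilePerm k n τ (finProdFinEquiv (a, b)) : Fin (k * n)) : ℕ) = (b : ℕ) + n * (τ a : ℕ) := by
  simp [pilePerm]

lemma finProdFinEquiv_val (k n : ℕ) (a : Fin k) (b : Fin n) :
    ((finProdFinEquiv (a, b) : Fin (k * n)) : ℕ) = (b : ℕ) + n * (a : ℕ) := by
  simp

section zmodfacts

variable (m : ℕ) [NeZero m]

lemma val_injective : Function.Injective (ZMod.val : ZMod m → ℕ) := by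
  intro a b h
  rw [← ZMod.natCast_rightInverse a, ← ZMod.natCast_rightInverse b, h]

lemma val_neg_one (hm : 1 ≤ m) : ((-1 : ZMod m)).val = m - 1 := by
  have h2 : (-1 : ZMod m) = ((m - 1 : ℕ) : ZMod m) := by
    rw [Nat.cast_sub hm, ZMod.natCast_self, Nat.cast_one, zero_sub]
  rw [h2, ZMod.val_cast_of_lt (by omega)]

lemma val_add_one (z : ZMod m) : (z + 1).val = (z.val + 1) % m := by
  rw [ZMod.val_add, ZMod.val_one_eq_one_mod, Nat.add_mod z.val 1 m,
    Nat.mod_eq_of_lt (ZMod.val_lt z)]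

end zmodfacts

section digits

variable {k n m : ℕ} [NeZero m] (hk : 2 ≤ k) (hn : n = k ^ (m - 1)) (h1 : k * n = k ^ m)

include hk hn

lemma cardEquiv_std (p : Fin (k * n)) (z : ZMod m) :
    cardEquiv k n m h1 (stdShuffle k n p) (z + 1) = cardEquiv k n m h1 p z := by
  have hm : 1 ≤ m := Nat.one_le_iff_ne_zero.mpr (NeZero.ne m)
  have hk0 : 0 < k := by omega
  have hn0 : 0 < n := hn ▸ pow_pos hk0 _
  obtain ⟨⟨a, b⟩, rfl⟩ : ∃ q, finProdFinEquiv q = p := ⟨finProdFinEquiv.symm p, Equiv.apply_symm_apply _ p⟩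
  apply Fin.ext
  rw [cardEquiv_apply_val, cardEquiv_apply_val, val_add_one]
  have hlm : z.val < m := ZMod.val_lt z
  set l := z.val with hldef
  have hpv : ((finProdFinEquiv (a, b) : Fin (k * n)) : ℕ) = (b : ℕ) + n * (a : ℕ) :=
    finProdFinEquiv_val k n a b
  rcases Nat.lt_or_ge l (m - 1) with hcase | hcase
  · have hmod : (l + 1) % m = l + 1 := Nat.mod_eq_of_lt (by omega)
    rw [hmod, stdShuffle_val, hpv]
    have hL : ((a : ℕ) + k * (b : ℕ)) / k ^ (l + 1) % k = (b : ℕ) / k ^ l % k := by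
      rw [pow_succ' k l, ← Nat.div_div_eq_div_mul,
        Nat.add_mul_div_left _ _ hk0, Nat.div_eq_of_lt a.isLt, Nat.zero_add]
    have hR : ((b : ℕ) + n * (a : ℕ)) / k ^ l % k = (b : ℕ) / k ^ l % k :=
      digit_lower' hk0 (by omega : l < m - 1) hn
    rw [hL, hR]
  · have hleq : l = m - 1 := by omega
    have hmod : (l + 1) % m = 0 := by
      rw [hleq, Nat.sub_add_cancel hm, Nat.mod_self]
    rw [hmod, stdShuffle_val, hpv, pow_zero, Nat.div_one, hleq, ← hn,
      Nat.add_mul_mod_self_left, Nat.mod_eq_of_lt a.isLt,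
      Nat.add_mul_div_left _ _ hn0, Nat.div_eq_of_lt b.isLt, Nat.zero_add,
      Nat.mod_eq_of_lt a.isLt]

lemma cardEquiv_pile (τ : Equiv.Perm (Fin k)) (p : Fin (k * n)) (z : ZMod m) :
    cardEquiv k n m h1 (pilePerm k n τ p) z =
      (Pi.mulSingle (M := fun _ : ZMod m => Equiv.Perm (Fin k)) (-1) τ z)
        (cardEquiv k n m h1 p z) := by
  have hm : 1 ≤ m := Nat.one_le_iff_ne_zero.mpr (NeZero.ne m)
  have hk0 : 0 < k := by omega
  have hn0 : 0 < n := hn ▸ pow_pos hk0 _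
  obtain ⟨⟨a, b⟩, rfl⟩ : ∃ q, finProdFinEquiv q = p := ⟨finProdFinEquiv.symm p, Equiv.apply_symm_apply _ p⟩
  have hpv : ((finProdFinEquiv (a, b) : Fin (k * n)) : ℕ) = (b : ℕ) + n * (a : ℕ) :=
    finProdFinEquiv_val k n a b
  have hdig : cardEquiv k n m h1 (finProdFinEquiv (a, b)) (-1) = a := by
    apply Fin.ext
    rw [cardEquiv_apply_val, val_neg_one m hm, ← hn, hpv,
      Nat.add_mul_div_left _ _ hn0, Nat.div_eq_of_lt b.isLt, Nat.zero_add,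
      Nat.mod_eq_of_lt a.isLt]
  by_cases hz : z = -1
  · subst hz
    rw [Pi.mulSingle_eq_same, hdig]
    apply Fin.ext
    rw [cardEquiv_apply_val, val_neg_one m hm, ← hn, pilePerm_val,
      Nat.add_mul_div_left _ _ hn0, Nat.div_eq_of_lt b.isLt, Nat.zero_add,
      Nat.mod_eq_of_lt (τ a).isLt]
  · rw [Pi.mulSingle_eq_of_ne hz, Equiv.Perm.one_apply]
    have hlm : z.val < m - 1 := by
      have h2 : z.val < m := ZMod.val_lt z
      rcases Nat.lt_or_ge z.val (m - 1) with h | h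
      · exact h
      · exfalso
        apply hz
        apply val_injective m
        rw [val_neg_one m hm]
        omega
    apply Fin.ext
    rw [cardEquiv_apply_val, cardEquiv_apply_val, pilePerm_val, hpv]
    rw [digit_lower' hk0 hlm hn, digit_lower' hk0 hlm hn]

end digits

section conjsec

variable {k n m : ℕ} [NeZero m] (hk : 2 ≤ k) (hn : n = k ^ (m - 1)) (h1 : k * n = k ^ m)

include hk hn

lemma conj_std :
    permCongrMulEquiv (cardEquiv k n m h1) (stdShuffle k n) =
      Phi k m (inr (Multiplicative.ofAdd (1 : ZMod m))) := by
  refine Equiv.ext fun f => funext fun i => ?_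
  rw [permCongrMulEquiv_apply, Phi_apply]
  simp only [left_inr, right_inr, Pi.one_apply, Equiv.Perm.one_apply, toAdd_ofAdd]
  have h3 := cardEquiv_std hk hn h1 ((cardEquiv k n m h1).symm f) (-1 + i)
  rw [show (-1 + i) + 1 = i from by ring] at h3
  rw [h3, Equiv.apply_symm_apply]

lemma conj_pile (τ : Equiv.Perm (Fin k)) :
    permCongrMulEquiv (cardEquiv k n m h1) (pilePerm k n τ) =
      Phi k m (inl (Pi.mulSingle (-1 : ZMod m) τ)) := by
  refine Equiv.ext fun f => funext fun i => ?_
  rw [permCongrMulEquiv_apply, Phi_apply]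
  simp only [left_inl, right_inl, toAdd_one, neg_zero, zero_add]
  have h3 := cardEquiv_pile hk hn h1 τ ((cardEquiv k n m h1).symm f) i
  rw [h3, Equiv.apply_symm_apply]

end conjsec

section gens

variable (k m : ℕ) [NeZero m]

/-- The images of the shuffle generators inside the wreath product. -/
def gensW : Set (SemidirectProduct (ZMod m → Equiv.Perm (Fin k)) (Multiplicative (ZMod m))
    (cyclicShiftAct m (Equiv.Perm (Fin k)))) :=
  {inr (Multiplicative.ofAdd (1 : ZMod m))} ∪
    Set.range (fun τ : Equiv.Perm (Fin k) => inl (Pi.mulSingle (-1 : ZMod m) τ))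

lemma inr_mem_closure (g : Multiplicative (ZMod m)) :
    inr g ∈ Subgroup.closure (gensW k m) := by
  have hg : inr (φ := cyclicShiftAct m (Equiv.Perm (Fin k))) g
      = (inr (Multiplicative.ofAdd (1 : ZMod m))) ^ (g.toAdd.val) := by
    rw [← map_pow]
    congr 1
    rw [← ofAdd_nsmul]
    have : (g.toAdd.val : ℕ) • (1 : ZMod m) = g.toAdd := by
      rw [nsmul_eq_mul, mul_one]
      exact ZMod.natCast_rightInverse g.toAdd
    rw [this]
    rfl
  rw [hg]
  have hmem : (inr (Multiplicative.ofAdd (1 : ZMod m)) :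
      SemidirectProduct (ZMod m → Equiv.Perm (Fin k)) (Multiplicative (ZMod m))
        (cyclicShiftAct m (Equiv.Perm (Fin k)))) ∈ gensW k m :=
    Set.mem_union_left _ rfl
  exact pow_mem (Subgroup.subset_closure hmem) _

lemma act_mulSingle (z j : ZMod m) (τ : Equiv.Perm (Fin k)) :
    cyclicShiftAct m (Equiv.Perm (Fin k)) (Multiplicative.ofAdd z) (Pi.mulSingle j τ) =
      Pi.mulSingle (j + z) τ := by
  funext i
  have hL : (cyclicShiftAct m (Equiv.Perm (Fin k)) (Multiplicative.ofAdd z)) (Pi.mulSingle j τ) i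
      = Pi.mulSingle (M := fun _ : ZMod m => Equiv.Perm (Fin k)) j τ (-z + i) := rfl
  rw [hL]
  by_cases h : i = j + z
  · subst h
    rw [show -z + (j + z) = j from by ring, Pi.mulSingle_eq_same, Pi.mulSingle_eq_same]
  · rw [Pi.mulSingle_eq_of_ne h, Pi.mulSingle_eq_of_ne ?_]
    intro hcon
    apply h
    rw [← hcon]
    ring

lemma inl_single_mem_closure (i : ZMod m) (τ : Equiv.Perm (Fin k)) :
    inl (φ := cyclicShiftAct m (Equiv.Perm (Fin k))) (Pi.mulSingle i τ)
      ∈ Subgroup.closure (gensW k m) := by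
  have hact := act_mulSingle k m (i + 1) (-1) τ
  rw [show (-1 : ZMod m) + (i + 1) = i from by ring] at hact
  rw [← hact, inl_aut]
  have hbase : inl (φ := cyclicShiftAct m (Equiv.Perm (Fin k))) (Pi.mulSingle (-1 : ZMod m) τ)
      ∈ Subgroup.closure (gensW k m) :=
    Subgroup.subset_closure (Set.mem_union_right _ ⟨τ, rfl⟩)
  exact mul_mem (mul_mem (inr_mem_closure k m _) hbase) (inv_mem (inr_mem_closure k m _))

lemma closure_gensW_top : Subgroup.closure (gensW k m) = ⊤ := by
  rw [eq_top_iff]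
  rintro x -
  rw [← inl_left_mul_inr_right x]
  refine mul_mem ?_ (inr_mem_closure k m x.right)
  have hx : x.left = Finset.univ.noncommProd (fun i => Pi.mulSingle i (x.left i))
      (fun i _ j _ _ => Pi.mulSingle_apply_commute x.left i j) :=
    (Finset.noncommProd_mulSingle x.left).symm
  rw [hx]
  erw [Finset.map_noncommProd]
  exact Subgroup.noncommProd_mem _ _ (fun i _ => inl_single_mem_closure k m i (x.left i))

end gens

end ShuffleWreathAux

/-- If `kn = k^m` (with `k ≥ 2`, `m ≥ 1`), then the shuffle group `G_{k,k^m}` is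
isomorphic as an abstract group to the wreath product `S_k ≀ C_m`, i.e. to the
semidirect product `(∏_{i ∈ Z/mZ} Sym({0,…,k-1})) ⋊ C_m` where a generator of the
cyclic group `C_m` of order `m` acts by cyclically shifting the `m` coordinates. -/
theorem shuffleGroup_of_prime_power (k m n : ℕ) (hk : 2 ≤ k) (hm : 1 ≤ m)
    (hn : n = k ^ (m - 1)) :
    Nonempty ((shuffleGroup k n) ≃*
      SemidirectProduct (ZMod m → Equiv.Perm (Fin k)) (Multiplicative (ZMod m))
        (cyclicShiftAct m (Equiv.Perm (Fin k)))) := by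
  have : NeZero m := ⟨by omega⟩
  have h1 : k * n = k ^ m := by
    rw [hn, ← pow_succ']
    congr 1
    omega
  set e := ShuffleWreathAux.cardEquiv k n m h1 with he
  set E := ShuffleWreathAux.permCongrMulEquiv e with hE
  have hmap : (shuffleGroup k n).map (E : Equiv.Perm (Fin (k * n)) →* Equiv.Perm (ZMod m → Fin k))
      = (ShuffleWreathAux.Phi k m).range := by
    rw [shuffleGroup, MonoidHom.map_closure, MonoidHom.range_eq_map,
      ← ShuffleWreathAux.closure_gensW_top k m, MonoidHom.map_closure]
    congr 1
    rw [ShuffleWreathAux.gensW, Set.image_union, Set.image_union, Set.image_singleton,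
      Set.image_singleton, ← Set.range_comp, ← Set.range_comp]
    congr 1
    · rw [show (E : Equiv.Perm (Fin (k * n)) →* Equiv.Perm (ZMod m → Fin k)) (stdShuffle k n)
        = ShuffleWreathAux.Phi k m (SemidirectProduct.inr (Multiplicative.ofAdd (1 : ZMod m)))
        from ShuffleWreathAux.conj_std hk hn h1]
    · exact congrArg Set.range (funext fun τ => ShuffleWreathAux.conj_pile hk hn h1 τ)
  exact ⟨(MulEquiv.subgroupMap E (shuffleGroup k n)).trans
    ((MulEquiv.subgroupCongr hmap).trans
      (MonoidHom.ofInjective (ShuffleWreathAux.Phi_injective k m hk)).symm)⟩
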